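/- arXiv:1011.5942 — 4 statements merged into one kernel-verified Lean document; each statement's English description precedes it below -/
import Mathlib

section
/- Let Ω ⊆ ℝ² be a nonempty set such that every (a,b) ∈ Conv(Ω) satisfies b ≥ T_min > 0 and b ≤ T_max, and such that a is bounded below on Conv(Ω). Then inf_{(a,b) ∈ Conv(Ω)} a/b = inf_{(a,b) ∈ Ω} a/b. -/
/-- The infimum ratio over the convexified (mixed) policy set equals the infimum ratio over
pure policies: if every point of `Conv(Ω)` has second coordinate in `[T_min, T_max]` with
`T_min > 0`, and first coordinate bounded below on `Conv(Ω)`, then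
`inf_{Conv(Ω)} a/b = inf_{Ω} a/b`. -/
theorem stmt5 (Ω : Set (ℝ × ℝ)) (hne : Ω.Nonempty) (Tmin Tmax : ℝ) (hTmin : 0 < Tmin)
    (hb : ∀ p ∈ convexHull ℝ Ω, Tmin ≤ p.2 ∧ p.2 ≤ Tmax)
    (hbdd : BddBelow ((fun p : ℝ × ℝ => p.1) '' (convexHull ℝ Ω))) :
    sInf ((fun p : ℝ × ℝ => p.1 / p.2) '' (convexHull ℝ Ω)) =
      sInf ((fun p : ℝ × ℝ => p.1 / p.2) '' Ω) := by
  obtain ⟨m, hm⟩ := hbdd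
  have hsub := subset_convexHull ℝ Ω
  -- uniform lower bound on the ratio over the hull
  have hratio : ∀ p ∈ convexHull ℝ Ω, -|m| / Tmin ≤ p.1 / p.2 := by
    intro p hp
    have hb2 := (hb p hp).1
    have hp2 : 0 < p.2 := lt_of_lt_of_le hTmin hb2
    have hm' : m ≤ p.1 := hm ⟨p, hp, rfl⟩
    have h1 : -|m| ≤ p.1 := le_trans (neg_abs_le m) hm'
    rw [div_le_div_iff₀ hTmin hp2]
    nlinarith [abs_nonneg m]
  have hbddH : BddBelow ((fun p : ℝ × ℝ => p.1 / p.2) '' (convexHull ℝ Ω)) :=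
    ⟨-|m| / Tmin, by rintro x ⟨p, hp, rfl⟩; exact hratio p hp⟩
  have hbddΩ : BddBelow ((fun p : ℝ × ℝ => p.1 / p.2) '' Ω) :=
    hbddH.mono (Set.image_mono hsub)
  have hneΩ : ((fun p : ℝ × ℝ => p.1 / p.2) '' Ω).Nonempty := hne.image _
  apply le_antisymm
  · exact csInf_le_csInf hbddH hneΩ (Set.image_mono hsub)
  · -- θ := inf over Ω; show every hull point has ratio ≥ θ
    set θ := sInf ((fun p : ℝ × ℝ => p.1 / p.2) '' Ω) with hθ
    apply le_csInf (hneΩ.mono (Set.image_mono hsub))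
    rintro x ⟨p, hp, rfl⟩
    -- the halfspace {p | θ * p.2 ≤ p.1} is convex and contains Ω
    have hC : Convex ℝ {q : ℝ × ℝ | θ * q.2 ≤ q.1} := by
      intro q hq r hr a b ha hb' hab
      simp only [Set.mem_setOf_eq] at *
      have := mul_le_mul_of_nonneg_left hq ha
      have := mul_le_mul_of_nonneg_left hr hb'
      simp only [Prod.fst_add, Prod.snd_add, Prod.smul_fst, Prod.smul_snd, smul_eq_mul]
      nlinarith
    have hΩC : Ω ⊆ {q : ℝ × ℝ | θ * q.2 ≤ q.1} := by
      intro q hq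
      have hq2 : 0 < q.2 := lt_of_lt_of_le hTmin (hb q (hsub hq)).1
      have : θ ≤ q.1 / q.2 := csInf_le hbddΩ ⟨q, hq, rfl⟩
      exact (le_div_iff₀ hq2).1 this
    have hp2 : 0 < p.2 := lt_of_lt_of_le hTmin (hb p hp).1
    have hpC : θ * p.2 ≤ p.1 := convexHull_min hΩC hC hp
    exact (le_div_iff₀ hp2).2 hpC
end

section
/- Suppose real sequences L[r] ≥ 0 and y_0[r] satisfy, for constants B ≥ 0, C ≥ 0, V > 0, θ_opt ∈ ℝ, and T[r] with 0 < T_min ≤ T[r] for all r: L[r+1] − L[r] + V·y_0[r] ≤ B + T[r]·(C + V·θ_opt) for every r ≥ 0. Then for every integer R > 0, writing ȳ_0[R] = (1/R)Σ_{r=0}^{R-1} y_0[r] and T̄[R] = (1/R)Σ_{r=0}^{R-1} T[r]: ȳ_0[R]/T̄[R] ≤ θ_opt + (B/T̄[R] + C)/V + L[0]/(V·R·T̄[R]). -/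
/-- Deterministic telescoping argument behind Theorem 1(b): from the per-frame
drift-plus-penalty inequality, the achieved penalty ratio after `R` frames satisfies
`ȳ₀[R]/T̄[R] ≤ θ_opt + (B/T̄[R] + C)/V + L[0]/(V·R·T̄[R])`. -/
theorem stmt11 (Lf y0 T : ℕ → ℝ) (B C V θopt Tmin : ℝ)
    (hB : 0 ≤ B) (hC : 0 ≤ C) (hV : 0 < V) (hTmin : 0 < Tmin)
    (hL : ∀ r, 0 ≤ Lf r) (hT : ∀ r, Tmin ≤ T r)
    (hdrift : ∀ r, Lf (r + 1) - Lf r + V * y0 r ≤ B + T r * (C + V * θopt))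
    (R : ℕ) (hR : 0 < R) :
    ((1 / R : ℝ) * ∑ r ∈ Finset.range R, y0 r) /
        ((1 / R : ℝ) * ∑ r ∈ Finset.range R, T r) ≤
      θopt + (B / ((1 / R : ℝ) * ∑ r ∈ Finset.range R, T r) + C) / V +
        Lf 0 / (V * R * ((1 / R : ℝ) * ∑ r ∈ Finset.range R, T r)) := by
  set S := ∑ r ∈ Finset.range R, T r with hSdef
  set Y := ∑ r ∈ Finset.range R, y0 r with hYdef
  have hRpos : (0 : ℝ) < R := by exact_mod_cast hR
  have hS : (R : ℝ) * Tmin ≤ S := by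
    calc (R : ℝ) * Tmin = ∑ _r ∈ Finset.range R, Tmin := by
          simp [mul_comm]
      _ ≤ S := Finset.sum_le_sum fun r _ => hT r
  have hSpos : 0 < S := lt_of_lt_of_le (by positivity) hS
  have hb : 0 < (1 / R : ℝ) * S := by positivity
  have key : Lf R - Lf 0 + V * Y ≤ R * B + S * (C + V * θopt) := by
    have tel : ∑ r ∈ Finset.range R, (Lf (r + 1) - Lf r) = Lf R - Lf 0 :=
      Finset.sum_range_sub Lf R
    have := Finset.sum_le_sum (fun r (_ : r ∈ Finset.range R) => hdrift r)
    simpa [Finset.sum_add_distrib, tel, ← Finset.mul_sum, ← Finset.sum_mul, mul_comm] using this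
  have hVY : V * Y ≤ R * B + S * C + V * θopt * S + Lf 0 := by
    have := hL R
    nlinarith [key]
  rw [div_le_iff₀ hb]
  have hRne : (R : ℝ) ≠ 0 := ne_of_gt hRpos
  have hSne : S ≠ 0 := ne_of_gt hSpos
  have hVne : V ≠ 0 := ne_of_gt hV
  field_simp
  nlinarith [mul_le_mul_of_nonneg_right hVY (by positivity : (0:ℝ) ≤ V * R * S * S * R)]
end

section
/- Combining the previous two facts: if Z_l[r+1] = max(Z_l[r] + y_l[r] − c_l·T[r], 0), T[r] ≥ T_min > 0, and (1/2)Σ_l (Z_l[r+1]² − Z_l[r]²) ≤ (F_1 + V·F_2)/2 for all r, then for all integers R > 0 and each l: (Σ_{r=0}^{R-1} y_l[r]) / (Σ_{r=0}^{R-1} T[r]) ≤ c_l + (1/T_min)·sqrt( (F_1 + V·F_2)/R + (Σ_{l'} Z_{l'}[0]²)/R² ). -/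
/-- Deterministic analogue of inequality (14): the constraint violation after `R` frames of
the drift-plus-penalty ratio algorithm is at most `O(sqrt((F₁ + V·F₂)/R))`. -/
theorem stmt13 (L : ℕ) (Z : Fin L → ℕ → ℝ) (y : Fin L → ℕ → ℝ) (c : Fin L → ℝ)
    (T : ℕ → ℝ) (F1 F2 V Tmin : ℝ)
    (hF1 : 0 ≤ F1) (hF2 : 0 ≤ F2) (hV : 0 ≤ V) (hTmin : 0 < Tmin)
    (hZnn : ∀ l r, 0 ≤ Z l r)
    (hrec : ∀ l r, Z l (r + 1) = max (Z l r + y l r - c l * T r) 0)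
    (hT : ∀ r, Tmin ≤ T r)
    (hdrift : ∀ r, (1 / 2) * ∑ l, (Z l (r + 1) ^ 2 - Z l r ^ 2) ≤ (F1 + V * F2) / 2)
    (R : ℕ) (hR : 0 < R) (l : Fin L) :
    (∑ r ∈ Finset.range R, y l r) / (∑ r ∈ Finset.range R, T r) ≤
      c l + (1 / Tmin) *
        Real.sqrt ((F1 + V * F2) / R + (∑ l', Z l' 0 ^ 2) / R ^ 2) := by
  set K := F1 + V * F2 with hK
  have hKnn : 0 ≤ K := by positivity
  set S0 := ∑ l', Z l' 0 ^ 2 with hS0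
  have hS0nn : 0 ≤ S0 := Finset.sum_nonneg fun i _ => sq_nonneg _
  have hRpos : (0:ℝ) < R := by exact_mod_cast hR
  -- telescoping bound on the queue
  have htel : (∑ r ∈ Finset.range R, y l r) - c l * ∑ r ∈ Finset.range R, T r ≤ Z l R := by
    have h1 : ∑ r ∈ Finset.range R, (y l r - c l * T r) ≤
        ∑ r ∈ Finset.range R, (Z l (r+1) - Z l r) := by
      refine Finset.sum_le_sum fun r _ => ?_
      have h2 : Z l r + y l r - c l * T r ≤ Z l (r+1) := by
        rw [hrec l r]; exact le_max_left _ _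
      linarith
    rw [Finset.sum_sub_distrib, ← Finset.mul_sum, Finset.sum_range_sub] at h1
    have := hZnn l 0
    linarith
  -- drift bound summed over frames
  have hZR2 : Z l R ^ 2 ≤ R * K + S0 := by
    have h1 : ∑ r ∈ Finset.range R, ∑ i, (Z i (r+1)^2 - Z i r^2) ≤ R * K := by
      calc ∑ r ∈ Finset.range R, ∑ i, (Z i (r+1)^2 - Z i r^2)
          ≤ ∑ r ∈ Finset.range R, K :=
            Finset.sum_le_sum fun r _ => by have := hdrift r; linarith
        _ = R * K := by rw [Finset.sum_const, Finset.card_range, nsmul_eq_mul]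
    rw [Finset.sum_comm] at h1
    have h2 : ∑ i, (Z i R ^2 - Z i 0 ^2) ≤ R * K := by
      calc ∑ i, (Z i R^2 - Z i 0^2)
          = ∑ i, ∑ r ∈ Finset.range R, (Z i (r+1)^2 - Z i r^2) := by
            refine Finset.sum_congr rfl fun i _ => ?_
            rw [Finset.sum_range_sub (fun n => Z i n ^ 2)]
        _ ≤ R * K := h1
    have h4 : Z l R^2 ≤ ∑ i, Z i R^2 :=
      Finset.single_le_sum (f := fun i => Z i R ^ 2) (fun i _ => sq_nonneg _) (Finset.mem_univ l)
    rw [Finset.sum_sub_distrib] at h2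
    have hS0eq : ∑ i, Z i 0 ^ 2 = S0 := rfl
    linarith
  set M := Real.sqrt (R * K + S0) with hM
  have hMnn : 0 ≤ M := Real.sqrt_nonneg _
  have hZlM : Z l R ≤ M := by
    have := Real.sqrt_le_sqrt hZR2
    rwa [Real.sqrt_sq (hZnn l R)] at this
  set ST := ∑ r ∈ Finset.range R, T r with hST
  have hSTge : R * Tmin ≤ ST := by
    calc (R:ℝ) * Tmin = ∑ r ∈ Finset.range R, Tmin := by
          rw [Finset.sum_const, Finset.card_range, nsmul_eq_mul]
      _ ≤ ST := Finset.sum_le_sum fun r _ => hT r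
  have hRTpos : 0 < (R:ℝ) * Tmin := by positivity
  have hSTpos : 0 < ST := lt_of_lt_of_le hRTpos hSTge
  -- combine
  have hA : (∑ r ∈ Finset.range R, y l r) - c l * ST ≤ M := le_trans htel hZlM
  have hdiv : ((∑ r ∈ Finset.range R, y l r) - c l * ST) / ST ≤ M / (R * Tmin) :=
    div_le_div₀ hMnn hA hRTpos hSTge
  have hsplit : ((∑ r ∈ Finset.range R, y l r) - c l * ST) / ST
      = (∑ r ∈ Finset.range R, y l r) / ST - c l := by
    field_simp
  have hrhs : M / (R * Tmin) = (1 / Tmin) * Real.sqrt (K / R + S0 / R ^ 2) := by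
    have h1 : K / R + S0 / R ^ 2 = (R * K + S0) / (R:ℝ) ^ 2 := by
      field_simp
    rw [h1, Real.sqrt_div (by positivity), Real.sqrt_sq hRpos.le]
    ring
  rw [hsplit] at hdiv
  rw [hrhs] at hdiv
  linarith
end

section
/- Let y_0[r], T[r] be real sequences with T[r] ≥ T_min > 0 for all r. Suppose limsup_{R→∞} (1/R)Σ_{r=0}^{R-1} (y_0[r] − T[r]·θ_opt) ≤ B/V for constants B ≥ 0, V > 0, θ_opt ∈ ℝ, and suppose limsup_{R→∞} R / (Σ_{r=0}^{R-1} T[r]) ≤ 1/T_min. Then limsup_{R→∞} (Σ_{r=0}^{R-1} y_0[r]) / (Σ_{r=0}^{R-1} T[r]) ≤ θ_opt + B/(V·T_min). -/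
open Filter

/-- Pathwise version of Theorem 6(b): a limsup bound on the average of the centered penalty
`y₀[r] − T[r]·θ_opt`, together with `limsup R/(∑ T[r]) ≤ 1/T_min`, gives
`limsup (∑ y₀[r])/(∑ T[r]) ≤ θ_opt + B/(V·T_min)`. -/
theorem stmt15 (y0 T : ℕ → ℝ) (Tmin B V θopt : ℝ)
    (hTmin : 0 < Tmin) (hT : ∀ r, Tmin ≤ T r) (hB : 0 ≤ B) (hV : 0 < V)
    (h1 : limsup (fun R : ℕ =>
        (((1 / R : ℝ) * ∑ r ∈ Finset.range R, (y0 r - T r * θopt) : ℝ) : EReal)) atTop ≤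
      ((B / V : ℝ) : EReal))
    (h2 : limsup (fun R : ℕ =>
        (((R : ℝ) / ∑ r ∈ Finset.range R, T r : ℝ) : EReal)) atTop ≤
      ((1 / Tmin : ℝ) : EReal)) :
    limsup (fun R : ℕ =>
        (((∑ r ∈ Finset.range R, y0 r) / (∑ r ∈ Finset.range R, T r) : ℝ) : EReal)) atTop ≤
      ((θopt + B / (V * Tmin) : ℝ) : EReal) := by
  set L := limsup (fun R : ℕ =>
        (((∑ r ∈ Finset.range R, y0 r) / (∑ r ∈ Finset.range R, T r) : ℝ) : EReal)) atTop with hL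
  have hBV : 0 ≤ B / V := div_nonneg hB hV.le
  have key : ∀ ε : ℝ, 0 < ε →
      L ≤ ((θopt + (B / V + ε) * (1 / Tmin + ε) : ℝ) : EReal) := by
    intro ε hε
    have ha : ∀ᶠ R : ℕ in atTop,
        ((1 / R : ℝ) * ∑ r ∈ Finset.range R, (y0 r - T r * θopt)) < B / V + ε := by
      have h := Filter.eventually_lt_of_limsup_lt
        (lt_of_le_of_lt h1 (EReal.coe_lt_coe_iff.mpr (lt_add_of_pos_right (B / V) hε)))
      filter_upwards [h] with R hR
      exact_mod_cast hR
    have hb : ∀ᶠ R : ℕ in atTop,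
        ((R : ℝ) / ∑ r ∈ Finset.range R, T r) < 1 / Tmin + ε := by
      have h := Filter.eventually_lt_of_limsup_lt
        (lt_of_le_of_lt h2 (EReal.coe_lt_coe_iff.mpr (lt_add_of_pos_right (1 / Tmin) hε)))
      filter_upwards [h] with R hR
      exact_mod_cast hR
    refine Filter.limsup_le_of_le (by isBoundedDefault) ?_
    filter_upwards [ha, hb, eventually_ge_atTop 1] with R hA hBv hR1
    rw [EReal.coe_le_coe_iff]
    set S := ∑ r ∈ Finset.range R, T r with hS
    set P := ∑ r ∈ Finset.range R, y0 r with hP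
    have hRpos : (0 : ℝ) < R := by exact_mod_cast hR1
    have hSpos : 0 < S := by
      have : (R : ℝ) * Tmin ≤ S := by
        rw [hS]
        calc (R : ℝ) * Tmin = ∑ _r ∈ Finset.range R, Tmin := by
              simp [mul_comm]
          _ ≤ ∑ r ∈ Finset.range R, T r := Finset.sum_le_sum fun r _ => hT r
      nlinarith
    have hC : ∑ r ∈ Finset.range R, (y0 r - T r * θopt) = P - S * θopt := by
      rw [hP, hS, Finset.sum_sub_distrib, Finset.sum_mul]
    have hbnonneg : 0 ≤ (R : ℝ) / S := div_nonneg hRpos.le hSpos.le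
    have hsplit : P / S = θopt +
        ((1 / R : ℝ) * ∑ r ∈ Finset.range R, (y0 r - T r * θopt)) * ((R : ℝ) / S) := by
      rw [hC]
      field_simp
      ring
    rw [hsplit]
    have step1 : ((1 / R : ℝ) * ∑ r ∈ Finset.range R, (y0 r - T r * θopt)) * ((R : ℝ) / S)
        ≤ (B / V + ε) * ((R : ℝ) / S) :=
      mul_le_mul_of_nonneg_right hA.le hbnonneg
    have step2 : (B / V + ε) * ((R : ℝ) / S) ≤ (B / V + ε) * (1 / Tmin + ε) :=
      mul_le_mul_of_nonneg_left hBv.le (by linarith)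
    linarith
  -- pass to the limit ε → 0⁺
  by_contra hcon
  push_neg at hcon
  have hf0 : θopt + (B / V + 0) * (1 / Tmin + 0) = θopt + B / (V * Tmin) := by
    rw [add_zero, add_zero, div_mul_div_comm, mul_one]
  have hcont : Tendsto (fun ε : ℝ => ((θopt + (B / V + ε) * (1 / Tmin + ε) : ℝ) : EReal))
      (nhdsWithin 0 (Set.Ioi 0)) (nhds ((θopt + B / (V * Tmin) : ℝ) : EReal)) := by
    have hreal : Tendsto (fun ε : ℝ => (θopt + (B / V + ε) * (1 / Tmin + ε) : ℝ))
        (nhdsWithin 0 (Set.Ioi 0)) (nhds (θopt + B / (V * Tmin))) := by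
      have : Continuous (fun ε : ℝ => (θopt + (B / V + ε) * (1 / Tmin + ε) : ℝ)) := by
        continuity
      have := (this.tendsto 0).mono_left (nhdsWithin_le_nhds (s := Set.Ioi (0:ℝ)))
      rwa [hf0] at this
    exact (continuous_coe_real_ereal.tendsto _).comp hreal
  have hev : ∀ᶠ ε : ℝ in nhdsWithin 0 (Set.Ioi 0),
      ((θopt + (B / V + ε) * (1 / Tmin + ε) : ℝ) : EReal) < L :=
    hcont.eventually_lt_const hcon
  obtain ⟨ε, hεlt, hεpos⟩ := (hev.and self_mem_nhdsWithin).exists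
  exact absurd (key ε hεpos) (not_le.mpr hεlt)
end
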